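/- arXiv:math/0508110 — 2 statements merged into one kernel-verified Lean document; each statement's English description precedes it below -/
import Mathlib

section
/- For every N ≥ 1 and all integers k > ℓ ≥ 1, the two-row factorial Schur Q-polynomials satisfy Ivanov's recursion: Q_{k+1,ℓ}(x|a) + Q_{k,ℓ+1}(x|a) + (a_{k+1} + a_{ℓ+1}) Q_{k,ℓ}(x|a) = Q_k(x|a) Q_{ℓ+1}(x|a) − Q_{k+1}(x|a) Q_ℓ(x|a) + (a_{ℓ+1} − a_{k+1}) Q_k(x|a) Q_ℓ(x|a), as an identity of polynomials in x_1,…,x_N and the parameters a_i. -/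
open Finset

noncomputable section

/-- The ambient polynomial ring `ℤ[x_1,…,x_N; a_2,a_3,…]`: the variable `Sum.inl i`
is `x_{i+1}`, and `Sum.inr j` is the parameter `a_{j+2}`. -/
abbrev QRing (N : ℕ) := MvPolynomial (Fin N ⊕ ℕ) ℤ

/-- The variable `x_i` (0-indexed). -/
def xv (N : ℕ) (i : Fin N) : QRing N := MvPolynomial.X (Sum.inl i)

/-- The parameter `a_m` for `m ≥ 2`; `a_1 = 0`. -/
def av (N : ℕ) (m : ℕ) : QRing N :=
  if 2 ≤ m then MvPolynomial.X (Sum.inr (m - 2)) else 0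

/-- The generating series `∏_{i=1}^N (1+x_i z)/(1−x_i z)`. -/
def genSeries (N : ℕ) : PowerSeries (QRing N) :=
  ∏ i : Fin N,
    (1 + PowerSeries.C (R := QRing N) (xv N i) * PowerSeries.X) *
      PowerSeries.invOfUnit (1 - PowerSeries.C (R := QRing N) (xv N i) * PowerSeries.X) 1

/-- The Schur Q-polynomial `Q_m(x)`: the coefficient of `z^m` in
`∏_{i=1}^N (1+x_i z)/(1−x_i z)`. -/
def Qone (N m : ℕ) : QRing N := PowerSeries.coeff (R := QRing N) m (genSeries N)

/-- Elementary symmetric polynomial `e_j` in the parameters `a_m`, `m ∈ s`. -/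
def esymA (N : ℕ) (s : Finset ℕ) (j : ℕ) : QRing N :=
  ∑ t ∈ s.powersetCard j, ∏ m ∈ t, av N m

/-- Complete homogeneous symmetric polynomial `h_m` in the parameters `a_i`, `i ∈ s`. -/
def hsymA (N : ℕ) (s : Finset ℕ) (m : ℕ) : QRing N :=
  ∑ t ∈ s.sym m, ((t : Multiset ℕ).map (av N)).prod

/-- The one-row factorial Schur Q-polynomial
`Q_m(x|a) = Σ_{j=0}^{m−1} (−1)^j e_j(a_2,…,a_m) Q_{m−j}(x)` for `m ≥ 1`, `Q_0(x|a) = 1`. -/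
def Qfact (N m : ℕ) : QRing N :=
  if m = 0 then 1 else
    ∑ j ∈ range m, (-1) ^ j * esymA N (Icc 2 m) j * Qone N (m - j)

/-- The coefficient `f_{k,ℓ}^{r,s}(a) = (−1)^{ℓ−s} Σ_{j=0}^{k+ℓ−r−s}
2 h_{k+ℓ−r−s−j}(a_{k+1},…,a_{r+1}) e_j(a_{s+2},…,a_ℓ)`. -/
def fco (N k l r s : ℕ) : QRing N :=
  (-1) ^ (l - s) *
    ∑ j ∈ range (k + l - r - s + 1),
      2 * hsymA N (Icc (k + 1) (r + 1)) (k + l - r - s - j) * esymA N (Icc (s + 2) l) j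

/-- The two-row factorial Schur Q-polynomial `Q_{k,ℓ}(x|a)` for `k ≥ ℓ ≥ 1`. -/
def Qfact2 (N k l : ℕ) : QRing N :=
  Qfact N k * Qfact N l +
    2 * ∑ i ∈ Icc 1 l, (-1) ^ i * Qfact N (k + i) * Qfact N (l - i) +
    ∑ r ∈ Icc k (k + l - 1), ∑ s ∈ range (k + l - r),
      fco N k l r s * Qfact N r * Qfact N s

lemma esymA_zero (N : ℕ) (s : Finset ℕ) : esymA N s 0 = 1 := by
  simp [esymA]

lemma esymA_eq_zero (N : ℕ) (s : Finset ℕ) (j : ℕ) (h : s.card < j) : esymA N s j = 0 := by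
  rw [esymA, Finset.powersetCard_eq_empty.2 h, Finset.sum_empty]

lemma esymA_insert (N : ℕ) (x : ℕ) (s : Finset ℕ) (hx : x ∉ s) (j : ℕ) :
    esymA N (insert x s) (j + 1) = esymA N s (j + 1) + av N x * esymA N s j := by
  rw [esymA, Finset.powersetCard_succ_insert hx, Finset.sum_union, esymA, esymA,
    Finset.sum_image, Finset.mul_sum]
  · congr 1
    refine Finset.sum_congr rfl fun t ht => ?_
    rw [Finset.prod_insert fun hxt => hx ((Finset.mem_powersetCard.1 ht).1 hxt)]
  · intro t ht u hu htu
    have hxt : x ∉ t := fun h => hx ((Finset.mem_powersetCard.1 ht).1 h)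
    have hxu : x ∉ u := fun h => hx ((Finset.mem_powersetCard.1 hu).1 h)
    have := congrArg (Finset.erase · x) htu
    simpa [Finset.erase_insert hxt, Finset.erase_insert hxu] using this
  · rw [Finset.disjoint_right]
    rintro t ht ht'
    rw [Finset.mem_image] at ht
    obtain ⟨u, hu, rfl⟩ := ht
    exact (fun h => hx ((Finset.mem_powersetCard.1 ht').1 h)) (Finset.mem_insert_self x u)

lemma hsymA_zero (N : ℕ) (s : Finset ℕ) : hsymA N s 0 = 1 := by
  rw [hsymA]
  simp only [Finset.sym_zero, Finset.sum_singleton]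
  rfl

lemma hsymA_empty (N : ℕ) (m : ℕ) : hsymA N ∅ (m + 1) = 0 := by
  simp [hsymA]

lemma sym_insert_eq (x : ℕ) (s : Finset ℕ) (hx : x ∉ s) (m : ℕ) :
    (insert x s).sym (m + 1) =
      s.sym (m + 1) ∪ ((insert x s).sym m).image (Sym.cons x) := by
  ext t
  simp only [Finset.mem_union, Finset.mem_sym_iff, Finset.mem_image, Finset.mem_insert]
  constructor
  · intro h
    by_cases hxt : x ∈ t
    · right
      refine ⟨t.erase x hxt, ?_, Sym.cons_erase hxt⟩
      intro a ha
      have : a ∈ t := by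
        have := Sym.coe_erase hxt
        have ha' : a ∈ (t : Multiset ℕ).erase x := by rwa [← this]
        exact Multiset.mem_of_mem_erase ha'
      simpa using h a this
    · left
      intro a ha
      rcases h a ha with rfl | h'
      · exact absurd ha hxt
      · exact h'
  · rintro (h | ⟨u, hu, rfl⟩)
    · intro a ha; exact Or.inr (h a ha)
    · intro a ha
      rcases Sym.mem_cons.1 ha with rfl | ha'
      · exact Or.inl rfl
      · exact hu a ha'

lemma hsymA_insert (N : ℕ) (x : ℕ) (s : Finset ℕ) (hx : x ∉ s) (m : ℕ) :
    hsymA N (insert x s) (m + 1) =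
      hsymA N s (m + 1) + av N x * hsymA N (insert x s) m := by
  rw [hsymA, sym_insert_eq x s hx m, Finset.sum_union, hsymA, hsymA, Finset.sum_image,
    Finset.mul_sum]
  · congr 1
    refine Finset.sum_congr rfl fun t _ => ?_
    rw [Sym.coe_cons, Multiset.map_cons, Multiset.prod_cons]
  · intro t _ u _ h
    exact (Sym.cons_inj_right x t u).1 h
  · rw [Finset.disjoint_right]
    rintro t ht ht'
    rw [Finset.mem_image] at ht
    obtain ⟨u, _, rfl⟩ := ht
    have : x ∈ s := Finset.mem_sym_iff.1 ht' x (Sym.mem_cons_self x u)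
    exact hx this

lemma Icc_insert_left (a b : ℕ) (h : a ≤ b) : Icc a b = insert a (Icc (a + 1) b) := by
  ext x; simp only [mem_Icc, mem_insert]; omega

lemma Icc_insert_right (a b : ℕ) (h : a ≤ b + 1) :
    Icc a (b + 1) = insert (b + 1) (Icc a b) := by
  ext x; simp only [mem_Icc, mem_insert]; omega

lemma hsymA_Icc_rec (N a b m : ℕ) (h : a ≤ b) :
    hsymA N (Icc a b) (m + 1) =
      hsymA N (Icc (a + 1) b) (m + 1) + av N a * hsymA N (Icc a b) m := by
  rw [Icc_insert_left a b h, hsymA_insert N a (Icc (a + 1) b) (by simp) m]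

lemma esymA_Icc_rec (N a b j : ℕ) (h : a ≤ b + 1) :
    esymA N (Icc a (b + 1)) (j + 1) =
      esymA N (Icc a b) (j + 1) + av N (b + 1) * esymA N (Icc a b) j := by
  rw [Icc_insert_right a b h, esymA_insert N (b + 1) (Icc a b) (by simp) j]

lemma hsymA_single (N a : ℕ) : hsymA N (Icc a a) 1 = av N a := by
  have h := hsymA_Icc_rec N a a 0 le_rfl
  rw [show Icc (a + 1) a = (∅ : Finset ℕ) from Icc_eq_empty (by omega)] at h
  rw [h, hsymA_empty, hsymA_zero, zero_add, mul_one]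

lemma fco_top_zero (N k l s : ℕ) (hs : s ≤ l) : fco N (k + 1) l k s = 0 := by
  rw [fco]
  have h1 : Icc (k + 1 + 1) (k + 1) = (∅ : Finset ℕ) := Icc_eq_empty (by omega)
  rw [h1]
  have h2 : ∀ j ∈ range (k + 1 + l - k - s + 1),
      2 * hsymA N ∅ (k + 1 + l - k - s - j) * esymA N (Icc (s + 2) l) j = 0 := by
    intro j hj
    rw [mem_range] at hj
    rcases Nat.eq_zero_or_pos (k + 1 + l - k - s - j) with h | h
    · have hj' : j = l + 1 - s := by omega
      rw [esymA_eq_zero N _ j (by rw [Nat.card_Icc]; omega), mul_zero]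
    · obtain ⟨m, hm⟩ : ∃ m, k + 1 + l - k - s - j = m + 1 := ⟨_, (Nat.succ_pred_eq_of_pos h).symm⟩
      rw [hm, hsymA_empty, mul_zero, zero_mul]
  rw [Finset.sum_congr rfl h2, Finset.sum_const, smul_zero, mul_zero]

lemma fco_diag (N k l i : ℕ) (hi : i ≤ l) : fco N k l (k + i) (l - i) = 2 * (-1) ^ i := by
  rw [fco]
  rw [show k + l - (k + i) - (l - i) = 0 by omega, show l - (l - i) = i by omega]
  rw [Finset.sum_range_one, hsymA_zero, esymA_zero]
  ring

lemma fco_three (N k l r s : ℕ) (hl : 1 ≤ l) (hkl : l < k) (hkr : k ≤ r) (hrs : r + s ≤ k + l) :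
    fco N (k + 1) l r s + fco N k (l + 1) r s +
      (av N (k + 1) + av N (l + 1)) * fco N k l r s =
      if r = k ∧ s = l then 2 * av N (l + 1) else 0 := by
  have hsl : s ≤ l := by omega
  rw [fco, fco, fco]
  set D := k + l - r - s with hD
  rw [show k + 1 + l - r - s = D + 1 by omega, show k + (l + 1) - r - s = D + 1 by omega,
    show l + 1 - s = (l - s) + 1 by omega]
  rcases eq_or_lt_of_le hsl with hseq | hslt
  · -- s = l, hence r = k, D = 0
    rw [show r = k by omega, show D = 0 by omega, show l - s = 0 by omega,
      if_pos ⟨rfl, hseq⟩]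
    rw [show Icc (s + 2) l = (∅ : Finset ℕ) from Icc_eq_empty (by omega),
      show Icc (s + 2) (l + 1) = (∅ : Finset ℕ) from Icc_eq_empty (by omega),
      show Icc (k + 1 + 1) (k + 1) = (∅ : Finset ℕ) from Icc_eq_empty (by omega)]
    rw [Finset.sum_range_succ, Finset.sum_range_succ, Finset.sum_range_succ,
      Finset.sum_range_succ, Finset.sum_range_succ]
    have he1 : esymA N (∅ : Finset ℕ) 1 = 0 := esymA_eq_zero N ∅ 1 (by simp)
    have h1 : hsymA N (∅ : Finset ℕ) 1 = 0 := hsymA_empty N 0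
    simp only [Finset.sum_range_zero, Nat.sub_self, Nat.sub_zero, Nat.add_sub_cancel,
      zero_add, hsymA_zero, esymA_zero, he1, h1, hsymA_single]
    ring
  · -- s < l
    rw [if_neg (by rintro ⟨rfl, rfl⟩; omega)]
    have T1 : ∑ j ∈ range (D + 1 + 1),
        2 * hsymA N (Icc (k + 1 + 1) (r + 1)) (D + 1 - j) * esymA N (Icc (s + 2) l) j =
        ∑ j ∈ range (D + 1 + 1),
          2 * hsymA N (Icc (k + 1) (r + 1)) (D + 1 - j) * esymA N (Icc (s + 2) l) j -
        av N (k + 1) * ∑ j ∈ range (D + 1),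
          2 * hsymA N (Icc (k + 1) (r + 1)) (D - j) * esymA N (Icc (s + 2) l) j := by
      have main : ∀ j ∈ range (D + 1),
          2 * hsymA N (Icc (k + 1 + 1) (r + 1)) (D + 1 - j) * esymA N (Icc (s + 2) l) j =
          2 * hsymA N (Icc (k + 1) (r + 1)) (D + 1 - j) * esymA N (Icc (s + 2) l) j -
            av N (k + 1) * (2 * hsymA N (Icc (k + 1) (r + 1)) (D - j) * esymA N (Icc (s + 2) l) j) := by
        intro j hj
        rw [mem_range] at hj
        rw [show D + 1 - j = (D - j) + 1 by omega,
          hsymA_Icc_rec N (k + 1) (r + 1) (D - j) (by omega)]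
        ring
      rw [Finset.sum_range_succ, Finset.sum_congr rfl main,
        Finset.sum_range_succ (n := D + 1)
          (f := fun j => 2 * hsymA N (Icc (k + 1) (r + 1)) (D + 1 - j) * esymA N (Icc (s + 2) l) j),
        Finset.sum_sub_distrib, Finset.mul_sum, Nat.sub_self, hsymA_zero, hsymA_zero]
      ring
    have T2 : ∑ j ∈ range (D + 1 + 1),
        2 * hsymA N (Icc (k + 1) (r + 1)) (D + 1 - j) * esymA N (Icc (s + 2) (l + 1)) j =
        ∑ j ∈ range (D + 1 + 1),
          2 * hsymA N (Icc (k + 1) (r + 1)) (D + 1 - j) * esymA N (Icc (s + 2) l) j +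
        av N (l + 1) * ∑ j ∈ range (D + 1),
          2 * hsymA N (Icc (k + 1) (r + 1)) (D - j) * esymA N (Icc (s + 2) l) j := by
      rw [Finset.sum_range_succ', Finset.sum_range_succ' (n := D + 1)
        (f := fun j => 2 * hsymA N (Icc (k + 1) (r + 1)) (D + 1 - j) * esymA N (Icc (s + 2) l) j),
        Finset.mul_sum]
      have h0 : esymA N (Icc (s + 2) (l + 1)) 0 = esymA N (Icc (s + 2) l) 0 := by
        rw [esymA_zero, esymA_zero]
      rw [h0]
      have hper : ∀ j ∈ range (D + 1),
          2 * hsymA N (Icc (k + 1) (r + 1)) (D + 1 - (j + 1)) * esymA N (Icc (s + 2) (l + 1)) (j + 1)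
          = 2 * hsymA N (Icc (k + 1) (r + 1)) (D + 1 - (j + 1)) * esymA N (Icc (s + 2) l) (j + 1)
            + av N (l + 1) * (2 * hsymA N (Icc (k + 1) (r + 1)) (D - j) * esymA N (Icc (s + 2) l) j) := by
        intro j hj
        rw [esymA_Icc_rec N (s + 2) l j (by omega), show D + 1 - (j + 1) = D - j by omega]
        ring
      rw [Finset.sum_congr rfl hper, Finset.sum_add_distrib]
      have : ∀ j ∈ range (D + 1),
          2 * hsymA N (Icc (k + 1) (r + 1)) (D + 1 - (j + 1)) * esymA N (Icc (s + 2) l) (j + 1)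
          = 2 * hsymA N (Icc (k + 1) (r + 1)) (D - j) * esymA N (Icc (s + 2) l) (j + 1) := by
        intro j hj
        rw [show D + 1 - (j + 1) = D - j by omega]
      rw [Finset.sum_congr rfl this]
      ring
    rw [pow_succ]
    linear_combination (-1 : QRing N) ^ (l - s) * T1 - (-1 : QRing N) ^ (l - s) * T2


set_option maxHeartbeats 1000000 in
/-- Ivanov's recursion: for `N ≥ 1` and `k > ℓ ≥ 1`,
`Q_{k+1,ℓ}(x|a) + Q_{k,ℓ+1}(x|a) + (a_{k+1} + a_{ℓ+1}) Q_{k,ℓ}(x|a)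
 = Q_k(x|a) Q_{ℓ+1}(x|a) − Q_{k+1}(x|a) Q_ℓ(x|a) + (a_{ℓ+1} − a_{k+1}) Q_k(x|a) Q_ℓ(x|a)`. -/
theorem Qfact2_recursion (N : ℕ) (hN : 1 ≤ N) (k l : ℕ) (hl : 1 ≤ l) (hkl : l < k) :
    Qfact2 N (k + 1) l + Qfact2 N k (l + 1) + (av N (k + 1) + av N (l + 1)) * Qfact2 N k l =
      Qfact N k * Qfact N (l + 1) - Qfact N (k + 1) * Qfact N l +
        (av N (l + 1) - av N (k + 1)) * Qfact N k * Qfact N l := by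
  simp only [Qfact2]
  rw [show k + 1 + l = k + l + 1 by omega, show k + (l + 1) = k + l + 1 by omega,
    show k + l + 1 - 1 = k + l by omega]
  -- middle sums cancellation
  have Hmid : (∑ i ∈ Icc 1 l, (-1) ^ i * Qfact N (k + 1 + i) * Qfact N (l - i)) +
      (∑ i ∈ Icc 1 (l + 1), (-1) ^ i * Qfact N (k + i) * Qfact N (l + 1 - i)) =
      -(Qfact N (k + 1) * Qfact N l) := by
    have him : Icc 1 (l + 1) = (Icc 0 l).image (1 + ·) := by
      rw [Finset.image_add_left_Icc]; congr 1 <;> omega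
    rw [him, Finset.sum_image (fun a _ b _ h => by omega)]
    rw [Icc_insert_left 0 l (by omega), Finset.sum_insert (by simp)]
    have hcong : ∀ i ∈ Icc 1 l,
        (-1 : QRing N) ^ (1 + i) * Qfact N (k + (1 + i)) * Qfact N (l + 1 - (1 + i)) =
        -((-1) ^ i * Qfact N (k + 1 + i) * Qfact N (l - i)) := by
      intro i hi
      rw [show k + (1 + i) = k + 1 + i by omega, show l + 1 - (1 + i) = l - i by omega,
        show 1 + i = i + 1 by omega, pow_succ]
      ring
    rw [Finset.sum_congr rfl hcong, Finset.sum_neg_distrib]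
    simp only [Nat.add_zero, Nat.add_sub_cancel, pow_one]
    ring
  -- extend the (k+1,l) double sum down to r = k
  have HF1 : (∑ r ∈ Icc k (k + l), ∑ s ∈ range (k + l + 1 - r),
        fco N (k + 1) l r s * Qfact N r * Qfact N s) =
      ∑ r ∈ Icc (k + 1) (k + l), ∑ s ∈ range (k + l + 1 - r),
        fco N (k + 1) l r s * Qfact N r * Qfact N s := by
    rw [Icc_insert_left k (k + l) (by omega), Finset.sum_insert (by simp), add_eq_right]
    refine Finset.sum_eq_zero fun s hs => ?_
    rw [mem_range] at hs
    rw [fco_top_zero N k l s (by omega), zero_mul, zero_mul]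
  -- split the (k,l) triangle into sub-triangle plus diagonal
  have HF0 : (∑ r ∈ Icc k (k + l), ∑ s ∈ range (k + l + 1 - r),
        fco N k l r s * Qfact N r * Qfact N s) =
      (∑ r ∈ Icc k (k + l - 1), ∑ s ∈ range (k + l - r),
        fco N k l r s * Qfact N r * Qfact N s) +
      (2 * (Qfact N k * Qfact N l) +
       2 * ∑ i ∈ Icc 1 l, (-1) ^ i * Qfact N (k + i) * Qfact N (l - i)) := by
    have hstep : ∀ r ∈ Icc k (k + l),
        (∑ s ∈ range (k + l + 1 - r), fco N k l r s * Qfact N r * Qfact N s) =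
        (∑ s ∈ range (k + l - r), fco N k l r s * Qfact N r * Qfact N s) +
          fco N k l r (k + l - r) * Qfact N r * Qfact N (k + l - r) := by
      intro r hr
      rw [mem_Icc] at hr
      rw [show k + l + 1 - r = (k + l - r) + 1 by omega, Finset.sum_range_succ]
    rw [Finset.sum_congr rfl hstep, Finset.sum_add_distrib]
    refine congrArg₂ (· + ·) ?_ ?_
    · -- row part: top row r = k + l is empty
      rw [show Icc k (k + l) = insert (k + l) (Icc k (k + l - 1)) by
          ext x; simp only [mem_Icc, mem_insert]; omega,
        Finset.sum_insert (by simp only [mem_Icc]; omega), Nat.sub_self,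
        Finset.sum_range_zero, zero_add]
    · -- diagonal part
      have him : Icc k (k + l) = (Icc 0 l).image (k + ·) := by
        rw [Finset.image_add_left_Icc]; congr 1 <;> omega
      rw [him, Finset.sum_image (fun a _ b _ h => by omega)]
      have hcong : ∀ i ∈ Icc 0 l,
          fco N k l (k + i) (k + l - (k + i)) * Qfact N (k + i) * Qfact N (k + l - (k + i)) =
          2 * ((-1) ^ i * Qfact N (k + i) * Qfact N (l - i)) := by
        intro i hi
        rw [mem_Icc] at hi
        rw [show k + l - (k + i) = l - i by omega, fco_diag N k l i hi.2]
        ring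
      rw [Finset.sum_congr rfl hcong, ← Finset.mul_sum,
        Icc_insert_left 0 l (by omega), Finset.sum_insert (by simp)]
      simp only [Nat.add_zero, Nat.sub_zero, pow_zero]
      ring
  -- pointwise sums combine
  have Hsplit : (∑ r ∈ Icc k (k + l), ∑ s ∈ range (k + l + 1 - r),
        fco N (k + 1) l r s * Qfact N r * Qfact N s) +
      (∑ r ∈ Icc k (k + l), ∑ s ∈ range (k + l + 1 - r),
        fco N k (l + 1) r s * Qfact N r * Qfact N s) +
      (av N (k + 1) + av N (l + 1)) *
      (∑ r ∈ Icc k (k + l), ∑ s ∈ range (k + l + 1 - r),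
        fco N k l r s * Qfact N r * Qfact N s) =
      ∑ r ∈ Icc k (k + l), ∑ s ∈ range (k + l + 1 - r),
        ((fco N (k + 1) l r s + fco N k (l + 1) r s +
          (av N (k + 1) + av N (l + 1)) * fco N k l r s) * (Qfact N r * Qfact N s)) := by
    rw [Finset.mul_sum, ← Finset.sum_add_distrib, ← Finset.sum_add_distrib]
    refine Finset.sum_congr rfl fun r _ => ?_
    rw [Finset.mul_sum, ← Finset.sum_add_distrib, ← Finset.sum_add_distrib]
    refine Finset.sum_congr rfl fun s _ => ?_
    ring
  have Hsum : (∑ r ∈ Icc k (k + l), ∑ s ∈ range (k + l + 1 - r),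
        ((fco N (k + 1) l r s + fco N k (l + 1) r s +
          (av N (k + 1) + av N (l + 1)) * fco N k l r s) * (Qfact N r * Qfact N s))) =
      2 * av N (l + 1) * (Qfact N k * Qfact N l) := by
    have hrow : ∀ r ∈ Icc k (k + l),
        (∑ s ∈ range (k + l + 1 - r),
          ((fco N (k + 1) l r s + fco N k (l + 1) r s +
            (av N (k + 1) + av N (l + 1)) * fco N k l r s) * (Qfact N r * Qfact N s))) =
        if r = k then 2 * av N (l + 1) * (Qfact N k * Qfact N l) else 0 := by
      intro r hr
      rw [mem_Icc] at hr
      have hcong : ∀ s ∈ range (k + l + 1 - r),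
          ((fco N (k + 1) l r s + fco N k (l + 1) r s +
            (av N (k + 1) + av N (l + 1)) * fco N k l r s) * (Qfact N r * Qfact N s)) =
          if r = k ∧ s = l then 2 * av N (l + 1) * (Qfact N r * Qfact N s) else 0 := by
        intro s hs
        rw [mem_range] at hs
        rw [fco_three N k l r s hl hkl hr.1 (by omega), ite_mul, zero_mul]
      rw [Finset.sum_congr rfl hcong]
      by_cases hrk : r = k
      · subst hrk
        simp only [true_and]
        rw [show r + l + 1 - r = l + 1 by omega]
        rw [Finset.sum_ite_eq' (range (l + 1)) l
          (fun s => 2 * av N (l + 1) * (Qfact N r * Qfact N s)),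
          if_pos (by rw [mem_range]; omega)]
        simp
      · rw [if_neg hrk]
        refine Finset.sum_eq_zero fun s _ => ?_
        rw [if_neg (by rintro ⟨h1, _⟩; exact hrk h1)]
    rw [Finset.sum_congr rfl hrow,
      Finset.sum_ite_eq' (Icc k (k + l)) k
        (fun _ => 2 * av N (l + 1) * (Qfact N k * Qfact N l)),
      if_pos (by rw [mem_Icc]; omega)]
  linear_combination (2 : QRing N) * Hmid - HF1 - (av N (k + 1) + av N (l + 1)) * HF0 +
    Hsplit + Hsum

end
end

section
/- Fix n ≥ 1 and δ = (δ_1,…,δ_n) ∈ {0,1}^n. For every integer k > n, the specialized one-row factorial Schur Q-polynomial Q_k(x_δ | x_⟨n⟩) is the zero polynomial in ℤ[x_1,…,x_n]. -/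
open Finset

noncomputable section

/-- The specialization `ℤ[x;a] → ℤ[x_1,…,x_n]` sending `x_i ↦ δ_i x_i` (for
`δ ∈ {0,1}^n`) and `a_m ↦ x_{n−m+2}` for `2 ≤ m ≤ n+1`, `a_m ↦ 0` for `m > n+1`
(0-indexed: the variable `Sum.inr j`, i.e. `a_{j+2}`, goes to `x` with 0-indexed
index `n−1−j` when `j < n`, and to `0` otherwise). -/
def specHom (n : ℕ) (δ : Fin n → Bool) : QRing n →+* MvPolynomial (Fin n) ℤ :=
  MvPolynomial.eval₂Hom (Int.castRingHom (MvPolynomial (Fin n) ℤ))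
    (Sum.elim (fun i => if δ i then MvPolynomial.X i else 0)
      (fun j => if h : j < n then MvPolynomial.X (⟨n - 1 - j, by omega⟩ : Fin n) else 0))

/-! ### Auxiliary lemmas -/

/-- Coefficients of `∏ (1 + cᵢ z)` are sums over subsets. -/
lemma QAux_coeff_prod_one_add {R : Type*} [CommRing R] {ι : Type*} [DecidableEq ι]
    (s : Finset ι) (c : ι → R) (k : ℕ) :
    PowerSeries.coeff (R := R) k (∏ i ∈ s, (1 + PowerSeries.C (R := R) (c i) * PowerSeries.X)) =
      ∑ t ∈ s.powersetCard k, ∏ i ∈ t, c i := by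
  induction s using Finset.induction generalizing k with
  | empty =>
    cases k with
    | zero => simp
    | succ k =>
      rw [Finset.powersetCard_eq_empty.2 (by simp)]
      simp [PowerSeries.coeff_one]
  | @insert a s ha ih =>
    rw [Finset.prod_insert ha, add_mul, one_mul, mul_assoc, map_add]
    cases k with
    | zero =>
      simp only [PowerSeries.coeff_C_mul, PowerSeries.coeff_zero_X_mul, mul_zero, add_zero, ih]
      simp
    | succ k =>
      have key : ∀ t ∈ s.powersetCard k, a ∉ t := fun t ht hat =>
        ha ((Finset.mem_powersetCard.1 ht).1 hat)
      rw [PowerSeries.coeff_C_mul, PowerSeries.coeff_succ_X_mul, ih, ih,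
        Finset.powersetCard_succ_insert ha, Finset.sum_union, Finset.sum_image]
      · rw [Finset.mul_sum]
        congr 1
        refine Finset.sum_congr rfl fun t ht => ?_
        rw [Finset.prod_insert (key t ht)]
      · intro t ht u hu htu
        have h1 := key t ht; have h2 := key u hu
        apply Finset.ext; intro b
        constructor <;> intro hb
        · have : b ∈ insert a u := htu ▸ Finset.mem_insert_of_mem hb
          rcases Finset.mem_insert.1 this with h | h
          · exact absurd (h ▸ hb) h1
          · exact h
        · have : b ∈ insert a t := htu.symm ▸ Finset.mem_insert_of_mem hb
          rcases Finset.mem_insert.1 this with h | h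
          · exact absurd (h ▸ hb) h2
          · exact h
      · rw [Finset.disjoint_left]
        intro t ht htim
        rcases Finset.mem_image.1 htim with ⟨u, hu, rfl⟩
        exact ha ((Finset.mem_powersetCard.1 ht).1 (Finset.mem_insert_self a u))

lemma QAux_spec_av (n : ℕ) (δ : Fin n → Bool) (m : ℕ) (h2 : 2 ≤ m) (hm : m ≤ n + 1) :
    specHom n δ (av n m) = MvPolynomial.X (⟨n - 1 - (m - 2), by omega⟩ : Fin n) := by
  rw [av, if_pos h2, specHom, MvPolynomial.eval₂Hom_X']
  simp only [Sum.elim_inr]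
  rw [dif_pos (by omega)]

lemma QAux_spec_av_zero (n : ℕ) (δ : Fin n → Bool) (m : ℕ) (hm : n + 1 < m) :
    specHom n δ (av n m) = 0 := by
  rw [av, if_pos (by omega), specHom, MvPolynomial.eval₂Hom_X']
  simp only [Sum.elim_inr]
  rw [dif_neg (by omega)]

lemma QAux_reindex (n : ℕ) (δ : Fin n → Bool) (k : ℕ) (hk : n + 1 ≤ k) :
    ∏ m ∈ Icc 2 k, (1 + PowerSeries.C (specHom n δ (av n m)) * PowerSeries.X) =
    ∏ i : Fin n, (1 + PowerSeries.C (MvPolynomial.X i) * PowerSeries.X) := by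
  rw [← Finset.prod_subset (Finset.Icc_subset_Icc_right hk : Icc 2 (n+1) ⊆ Icc 2 k)
    (fun m hm hm' => by
      rw [QAux_spec_av_zero n δ m (by simp [Finset.mem_Icc] at hm hm'; omega)]
      simp)]
  refine Finset.prod_bij' (fun m hm => (⟨n - 1 - (m - 2), ?_⟩ : Fin n))
    (fun i _ => n + 1 - i.val) ?_ ?_ ?_ ?_ ?_
  · simp [Finset.mem_Icc] at hm; omega
  · intros; simp
  · intro i _; simp [Finset.mem_Icc]; omega
  · intro m hm; simp only [Finset.mem_Icc] at hm; simp only; omega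
  · intro i _; apply Fin.ext; simp; omega
  · intro m hm
    simp [Finset.mem_Icc] at hm
    rw [QAux_spec_av n δ m hm.1 hm.2]

/-- `ε i`: the variable with sign according to `δ`. -/
def QAux_eps (n : ℕ) (δ : Fin n → Bool) (i : Fin n) : MvPolynomial (Fin n) ℤ :=
  if δ i then MvPolynomial.X i else - MvPolynomial.X i

lemma QAux_spec_xv (n : ℕ) (δ : Fin n → Bool) (i : Fin n) :
    specHom n δ (xv n i) = if δ i then MvPolynomial.X i else 0 := by
  rw [xv, specHom, MvPolynomial.eval₂Hom_X']; rfl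

lemma QAux_key_prod (n : ℕ) (δ : Fin n → Bool) :
    (∏ i : Fin n, (1 - PowerSeries.C (MvPolynomial.X i) * PowerSeries.X)) *
      PowerSeries.map (specHom n δ) (genSeries n) =
    ∏ i : Fin n, (1 + PowerSeries.C (QAux_eps n δ i) * PowerSeries.X) := by
  rw [genSeries, map_prod, ← Finset.prod_mul_distrib]
  refine Finset.prod_congr rfl fun i _ => ?_
  have hunit : (1 - PowerSeries.C (R := QRing n) (xv n i) * PowerSeries.X) *
      PowerSeries.invOfUnit (1 - PowerSeries.C (R := QRing n) (xv n i) * PowerSeries.X) 1 = 1 := by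
    apply PowerSeries.mul_invOfUnit
    simp
  have hrel : (1 - PowerSeries.C (specHom n δ (xv n i)) * PowerSeries.X) *
      PowerSeries.map (specHom n δ)
        (PowerSeries.invOfUnit (1 - PowerSeries.C (R := QRing n) (xv n i) * PowerSeries.X) 1) = 1 := by
    have := congrArg (PowerSeries.map (specHom n δ)) hunit
    simp only [map_mul, map_sub, map_one, PowerSeries.map_C, PowerSeries.map_X] at this
    exact this
  rw [map_mul, map_add, map_one, map_mul, PowerSeries.map_C, PowerSeries.map_X]
  rw [QAux_spec_xv] at hrel ⊢
  by_cases h : δ i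
  · rw [if_pos h] at hrel ⊢
    rw [QAux_eps, if_pos h]
    set A := PowerSeries.C (R := MvPolynomial (Fin n) ℤ) (MvPolynomial.X i) * PowerSeries.X
    set I := PowerSeries.map (specHom n δ)
        (PowerSeries.invOfUnit (1 - PowerSeries.C (R := QRing n) (xv n i) * PowerSeries.X) 1)
    linear_combination (1 + A) * hrel
  · rw [if_neg h] at hrel ⊢
    rw [QAux_eps, if_neg h]
    set I := PowerSeries.map (specHom n δ)
        (PowerSeries.invOfUnit (1 - PowerSeries.C (R := QRing n) (xv n i) * PowerSeries.X) 1)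
    simp only [map_zero, zero_mul, sub_zero, add_zero, one_mul] at hrel ⊢
    rw [hrel, mul_one, map_neg]
    ring

/-- For `n ≥ 1`, `δ ∈ {0,1}^n` and `k > n`, the specialized one-row factorial Schur
Q-polynomial `Q_k(x_δ | x_⟨n⟩)` is the zero polynomial in `ℤ[x_1,…,x_n]`. -/
theorem Qfact_specialized_vanishes (n : ℕ) (hn : 1 ≤ n) (δ : Fin n → Bool)
    (k : ℕ) (hk : n < k) :
    specHom n δ (Qfact n k) = 0 := by
  set R := MvPolynomial (Fin n) ℤ
  set φ := specHom n δ
  set F := PowerSeries.map φ (genSeries n) with hF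
  set P : PowerSeries R := ∏ i : Fin n, (1 - PowerSeries.C (R := R) (MvPolynomial.X i) * PowerSeries.X)
    with hP
  -- elementary symmetric polynomials in `x`
  set E : ℕ → R := fun j => ∑ t ∈ (univ : Finset (Fin n)).powersetCard j, ∏ i ∈ t, MvPolynomial.X i
    with hE
  have hEzero : ∀ j, n < j → E j = 0 := by
    intro j hj
    rw [hE]
    simp only
    rw [Finset.powersetCard_eq_empty.2 (by simpa using hj), Finset.sum_empty]
  -- coefficients of P
  have hPcoeff : ∀ j, PowerSeries.coeff (R := R) j P = (-1) ^ j * E j := by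
    intro j
    have : P = ∏ i : Fin n,
        (1 + PowerSeries.C (R := R) (-MvPolynomial.X i) * PowerSeries.X) := by
      rw [hP]
      refine Finset.prod_congr rfl fun i _ => ?_
      rw [map_neg, neg_mul, sub_eq_add_neg]
    rw [this, QAux_coeff_prod_one_add, hE]
    simp only
    rw [Finset.mul_sum]
    refine Finset.sum_congr rfl fun t ht => ?_
    have hcard := (Finset.mem_powersetCard.1 ht).2
    calc ∏ i ∈ t, -MvPolynomial.X (R := ℤ) i
        = ∏ i ∈ t, (-1) * MvPolynomial.X i := by
          refine Finset.prod_congr rfl fun i _ => (neg_one_mul _).symm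
      _ = (-1) ^ t.card * ∏ i ∈ t, MvPolynomial.X i := by
          rw [Finset.prod_mul_distrib, Finset.prod_const]
      _ = (-1) ^ j * ∏ i ∈ t, MvPolynomial.X i := by rw [hcard]
  -- specialized elementary symmetric polynomials in the parameters
  have hesym : ∀ j, φ (esymA n (Icc 2 k) j) = E j := by
    intro j
    rw [esymA, map_sum]
    simp_rw [map_prod]
    rw [← QAux_coeff_prod_one_add, QAux_reindex n δ k (by omega),
      QAux_coeff_prod_one_add, hE]
  have hQone : ∀ m, φ (Qone n m) = PowerSeries.coeff (R := R) m F := by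
    intro m; rw [Qone, hF, PowerSeries.coeff_map]
  rw [Qfact, if_neg (by omega), map_sum]
  have hterm : ∀ j ∈ range k, φ ((-1) ^ j * esymA n (Icc 2 k) j * Qone n (k - j)) =
      PowerSeries.coeff (R := R) j P * PowerSeries.coeff (R := R) (k - j) F := by
    intro j hj
    rw [map_mul, map_mul, map_pow, map_neg, map_one, hesym, hQone, hPcoeff]
  rw [Finset.sum_congr rfl hterm]
  have hstep : ∑ j ∈ range k, PowerSeries.coeff (R := R) j P * PowerSeries.coeff (R := R) (k - j) F =
      ∑ j ∈ range (k + 1), PowerSeries.coeff (R := R) j P * PowerSeries.coeff (R := R) (k - j) F := by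
    rw [Finset.sum_range_succ, hPcoeff, hEzero k hk, mul_zero, zero_mul, add_zero]
  rw [hstep, ← Finset.Nat.sum_antidiagonal_eq_sum_range_succ_mk
    (fun p => PowerSeries.coeff (R := R) p.1 P * PowerSeries.coeff (R := R) p.2 F),
    ← PowerSeries.coeff_mul, QAux_key_prod, QAux_coeff_prod_one_add,
    Finset.powersetCard_eq_empty.2 (by simpa using hk), Finset.sum_empty]

end
end
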